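/- Let X ~ Poisson(mp) and Z = (X − mq)² − X for p, q ∈ [0,1] and m > 0. Then Var(Z) = 4m³p(p−q)² + 2m²p². -/

import Mathlib

/-- Poisson probability mass function with mean μ. -/
noncomputable def pois (μ : ℝ) (k : ℕ) : ℝ :=
  Real.exp (-μ) * μ^k / (Nat.factorial k)

lemma pois_hasSum (μ : ℝ) : HasSum (pois μ) 1 := by
  have h : HasSum (fun n : ℕ => μ ^ n / n.factorial) (Real.exp μ) := by
    have := NormedSpace.expSeries_div_hasSum_exp μ
    rwa [← Real.exp_eq_exp_ℝ] at this
  have h2 := h.mul_left (Real.exp (-μ))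
  rw [← Real.exp_add, neg_add_cancel, Real.exp_zero] at h2
  exact h2.congr_fun fun n => (mul_div_assoc _ _ _)

lemma pois_moment (μ : ℝ) (r : ℕ) :
    HasSum (fun k : ℕ => pois μ k * (k.descFactorial r : ℝ)) (μ ^ r) := by
  have hvan : ∀ k ∉ Set.range (fun j : ℕ => j + r),
      pois μ k * (k.descFactorial r : ℝ) = 0 := by
    intro k hk
    have hlt : k < r := by
      by_contra h
      push_neg at h
      exact hk ⟨k - r, by simp [Nat.sub_add_cancel h]⟩
    rw [Nat.descFactorial_eq_zero_iff_lt.2 hlt]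
    simp
  have hinj : Function.Injective (fun j : ℕ => j + r) :=
    fun a b h => Nat.add_right_cancel h
  rw [← hinj.hasSum_iff hvan]
  have base := (pois_hasSum μ).mul_left (μ ^ r)
  rw [mul_one] at base
  refine base.congr_fun fun j => ?_
  have hfac := Nat.factorial_mul_descFactorial (n := j + r) (k := r) (Nat.le_add_left r j)
  simp only [Nat.add_sub_cancel] at hfac
  have hfacR : (j.factorial : ℝ) * ((j + r).descFactorial r : ℝ)
      = ((j + r).factorial : ℝ) := by exact_mod_cast congrArg (Nat.cast (R := ℝ)) hfac
  have hj : (j.factorial : ℝ) ≠ 0 := by positivity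
  have hjr : ((j + r).factorial : ℝ) ≠ 0 := by positivity
  show pois μ (j + r) * ((j + r).descFactorial r : ℝ) = μ ^ r * pois μ j
  rw [pois, pois, pow_add]
  field_simp
  linear_combination (μ ^ j * μ ^ r) * hfacR

theorem stmt5 (m p q : ℝ) (hm : 0 < m) (hp : p ∈ Set.Icc (0:ℝ) 1) (hq : q ∈ Set.Icc (0:ℝ) 1) :
    ∑' k : ℕ, pois (m * p) k *
        ((((k : ℝ) - m * q)^2 - k) -
          ∑' j : ℕ, pois (m * p) j * (((j : ℝ) - m * q)^2 - j))^2
      = 4 * m^3 * p * (p - q)^2 + 2 * m^2 * p^2 := by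
  set μ := m * p with hμ
  set c := m * q with hc
  have d0 : ∀ k : ℕ, ((k.descFactorial 0 : ℕ) : ℝ) = 1 := by intro k; simp
  have d1 : ∀ k : ℕ, ((k.descFactorial 1 : ℕ) : ℝ) = k := by intro k; simp
  have d2 : ∀ k : ℕ, ((k.descFactorial 2 : ℕ) : ℝ) = k * (k - 1) :=
    fun k => Nat.cast_descFactorial_two ℝ k
  have d3 : ∀ k : ℕ, ((k.descFactorial 3 : ℕ) : ℝ) = k * (k - 1) * (k - 2) := by
    intro k
    match k with
    | 0 => simp
    | 1 => simp [Nat.descFactorial]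
    | (n+2) =>
      rw [show (3 : ℕ) = 2 + 1 from rfl, Nat.descFactorial_succ,
        Nat.cast_mul, Nat.cast_descFactorial_two]
      push_cast
      ring
  have d4 : ∀ k : ℕ, ((k.descFactorial 4 : ℕ) : ℝ) = k * (k - 1) * (k - 2) * (k - 3) := by
    intro k
    match k with
    | 0 => simp
    | 1 => simp [Nat.descFactorial]
    | 2 => simp [Nat.descFactorial]
    | (n+3) =>
      rw [show (4 : ℕ) = 3 + 1 from rfl, Nat.descFactorial_succ,
        Nat.cast_mul, d3]
      push_cast
      ring
  have hmean : HasSum (fun j : ℕ => pois μ j * (((j : ℝ) - c)^2 - j))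
      (μ ^ 2 + -(2*c) * μ ^ 1 + c^2 * μ ^ 0) := by
    have h := ((pois_moment μ 2).add ((pois_moment μ 1).mul_left (-(2*c)))).add
      ((pois_moment μ 0).mul_left (c^2))
    refine h.congr_fun fun k => ?_
    rw [d2, d1, d0]
    ring
  rw [hmean.tsum_eq]
  set d := μ ^ 2 + -(2*c) * μ ^ 1 + c^2 * μ ^ 0 with hd
  have hvar : HasSum (fun k : ℕ => pois μ k * ((((k : ℝ) - c)^2 - k) - d)^2)
      (μ^4 + (4 - 2*(2*c+1) + 2) * μ^3
        + ((2*c+1)^2 + 2*(c^2 - d) - 6*(2*c+1) + 7) * μ^2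
        + (1 - 2*(2*c+1) + (2*c+1)^2 + 2*(c^2-d) - 2*(2*c+1)*(c^2-d)) * μ^1
        + (c^2-d)^2 * μ^0) := by
    have h := (((((pois_moment μ 4).add
      ((pois_moment μ 3).mul_left (4 - 2*(2*c+1) + 2))).add
      ((pois_moment μ 2).mul_left
        ((2*c+1)^2 + 2*(c^2 - d) - 6*(2*c+1) + 7))).add
      ((pois_moment μ 1).mul_left
        (1 - 2*(2*c+1) + (2*c+1)^2 + 2*(c^2-d) - 2*(2*c+1)*(c^2-d)))).add
      ((pois_moment μ 0).mul_left ((c^2-d)^2)))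
    refine h.congr_fun fun k => ?_
    rw [d4, d3, d2, d1, d0]
    ring
  rw [hvar.tsum_eq, hd, hμ, hc]
  ring
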